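/- Let V be a finite-dimensional complex inner product space with isometric real structure A, and let W = cos(t)X + sin(t)(iY) with X, Y ∈ V(A) orthonormal and t ∈ [0, π/4]. Then W ∈ V(λA) for some unit complex number λ (i.e. W is fixed by some real structure in the circle family {λA : |λ|=1}) if and only if t = 0. -/

import Mathlib

theorem stmt_3 {V : Type*} [NormedAddCommGroup V] [InnerProductSpace ℂ V]
    [FiniteDimensional ℂ V] (A : V → V)
    (hadd : ∀ v w, A (v + w) = A v + A w)
    (hconj : ∀ (lam : ℂ) (v : V), A (lam • v) = (starRingEnd ℂ lam) • A v)
    (hinv : ∀ v, A (A v) = v)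
    (hiso : ∀ v w, (inner ℂ (A v) (A w) : ℂ).re = (inner ℂ v w : ℂ).re)
    (X Y : V) (hX : A X = X) (hY : A Y = Y)
    (hXX : (inner ℂ X X : ℂ).re = 1) (hYY : (inner ℂ Y Y : ℂ).re = 1)
    (hXY : (inner ℂ X Y : ℂ).re = 0)
    (t : ℝ) (ht : t ∈ Set.Icc 0 (Real.pi / 4))
    (W : V) (hW : W = (Real.cos t : ℂ) • X + (Real.sin t : ℂ) • (Complex.I • Y)) :
    (∃ lam : ℂ, ‖lam‖ = 1 ∧ lam • A W = W) ↔ t = 0 := by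
  obtain ⟨ht0, ht1⟩ := ht
  have hpi := Real.pi_pos
  have hAiY : A (Complex.I • Y) = (-Complex.I) • Y := by
    rw [hconj, hY, Complex.conj_I]
  have hXY0 : (inner ℂ X Y : ℂ) = 0 := by
    have h1 := hiso X (Complex.I • Y)
    rw [hX, hAiY, inner_smul_right, inner_smul_right] at h1
    have him : (inner ℂ X Y : ℂ).im = 0 := by
      simp only [Complex.mul_re, Complex.neg_re, Complex.I_re, Complex.neg_im,
        Complex.I_im] at h1
      linarith
    exact Complex.ext hXY him
  have hYX0 : (inner ℂ Y X : ℂ) = 0 := by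
    rw [← inner_conj_symm, hXY0, map_zero]
  have hXXc : (inner ℂ X X : ℂ) = 1 := by
    rw [← inner_self_ofReal_re (𝕜 := ℂ) X, RCLike.re_to_complex, hXX]; norm_num
  have hYYc : (inner ℂ Y Y : ℂ) = 1 := by
    rw [← inner_self_ofReal_re (𝕜 := ℂ) Y, RCLike.re_to_complex, hYY]; norm_num
  have hAW : A W = (Real.cos t : ℂ) • X + ((Real.sin t : ℂ) * (-Complex.I)) • Y := by
    rw [hW, hadd, hconj, hconj, hX, hAiY, Complex.conj_ofReal, Complex.conj_ofReal,
      smul_smul]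
  have hcos : (Real.cos t : ℂ) ≠ 0 := by
    have : 0 < Real.cos t := Real.cos_pos_of_mem_Ioo ⟨by linarith, by linarith⟩
    exact_mod_cast this.ne'
  constructor
  · rintro ⟨lam, hnorm, heq⟩
    rw [hAW, hW] at heq
    have heqX : lam * (Real.cos t : ℂ) = (Real.cos t : ℂ) := by
      have := congrArg (fun v => (inner ℂ X v : ℂ)) heq
      simp only [inner_add_right, inner_smul_right, hXXc, hXY0, mul_zero, mul_one,
        add_zero, zero_add] at this
      exact this
    have hlam : lam = 1 := mul_right_cancel₀ hcos (by rw [one_mul]; exact heqX)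
    have heqY : (Real.sin t : ℂ) * (-Complex.I) = (Real.sin t : ℂ) * Complex.I := by
      have := congrArg (fun v => (inner ℂ Y v : ℂ)) heq
      simp only [inner_add_right, inner_smul_right, hYYc, hYX0, mul_zero, mul_one,
        add_zero, zero_add, hlam, one_mul] at this
      exact this
    have hs : (2 : ℂ) * (Real.sin t : ℂ) * Complex.I = 0 := by
      linear_combination -1 * heqY
    have hs0 : (Real.sin t : ℂ) = 0 := by
      rcases mul_eq_zero.mp hs with h | h
      · rcases mul_eq_zero.mp h with h | h
        · norm_num at h
        · exact h
      · exact absurd h Complex.I_ne_zero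
    have hsin : Real.sin t = 0 := by exact_mod_cast hs0
    have := Real.sin_eq_zero_iff_of_lt_of_lt (x := t) (by linarith) (by linarith)
    exact this.mp hsin
  · rintro rfl
    exact ⟨1, by simp, by simp [hAW, hW, hX]⟩
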